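/- Fix an integer n ≥ 1 and define the sequence a : ℕ → ℝ by a_m := sup{ 2^{−j−n(i+2)²} : i, j ∈ ℕ, j ≤ i, m < 2^{j+n(i+2)²} } (the supremum of a nonempty bounded set of reals). Then: (i) m · a_m ≤ 1 for every m ≥ 0; (ii) Σ_{l=0}^m a_l ≤ (2/n) · log(2+m) for every m ≥ 0. -/

import Mathlib

open scoped BigOperators

/-- The singular value sequence of the operator `A_n`:
`a_m = sup { 2^{-j-n(i+2)²} : i, j ∈ ℕ, j ≤ i, m < 2^{j+n(i+2)²} }`. -/
noncomputable def aSeq (n : ℕ) (m : ℕ) : ℝ :=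
  sSup {r : ℝ | ∃ i j : ℕ, j ≤ i ∧ m < 2 ^ (j + n * (i + 2) ^ 2) ∧
    r = ((2 : ℝ) ^ (j + n * (i + 2) ^ 2))⁻¹}

def Expo (n k : ℕ) : Prop := ∃ i j : ℕ, j ≤ i ∧ k = j + n * (i + 2) ^ 2

lemma exAdm (n l : ℕ) : ∃ k, Expo n k ∧ l < 2 ^ k := by
  refine ⟨l + n * (l + 2) ^ 2, ⟨l, l, le_rfl, rfl⟩, ?_⟩
  calc l < 2 ^ l := (Nat.lt_two_pow_self (n := l))
    _ ≤ 2 ^ (l + n * (l + 2) ^ 2) := Nat.pow_le_pow_right (by norm_num) (by omega)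

open Classical in
noncomputable def Kf (n l : ℕ) : ℕ := Nat.find (exAdm n l)

open Classical in
lemma Kf_spec (n l : ℕ) : Expo n (Kf n l) ∧ l < 2 ^ Kf n l := Nat.find_spec (exAdm n l)

open Classical in
lemma Kf_min (n l k : ℕ) (hk : Expo n k) (hl : l < 2 ^ k) : Kf n l ≤ k :=
  Nat.find_min' (exAdm n l) ⟨hk, hl⟩

lemma Expo_ge (n k : ℕ) (h : Expo n k) : 4 * n ≤ k := by
  obtain ⟨i, j, hji, rfl⟩ := h
  nlinarith [sq_nonneg (i : ℤ)]

lemma aSeq_eq (n l : ℕ) : aSeq n l = ((2 : ℝ) ^ Kf n l)⁻¹ := by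
  obtain ⟨⟨i, j, hji, hk⟩, hl⟩ := Kf_spec n l
  have hub : ∀ r ∈ {r : ℝ | ∃ i j : ℕ, j ≤ i ∧ l < 2 ^ (j + n * (i + 2) ^ 2) ∧
      r = ((2 : ℝ) ^ (j + n * (i + 2) ^ 2))⁻¹}, r ≤ ((2 : ℝ) ^ Kf n l)⁻¹ := by
    rintro r ⟨i', j', hj', hl', rfl⟩
    have hK : Kf n l ≤ j' + n * (i' + 2) ^ 2 := Kf_min n l _ ⟨i', j', hj', rfl⟩ hl'
    exact inv_anti₀ (by positivity) (pow_le_pow_right₀ one_le_two hK)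
  have hmem : ((2 : ℝ) ^ Kf n l)⁻¹ ∈ {r : ℝ | ∃ i j : ℕ, j ≤ i ∧ l < 2 ^ (j + n * (i + 2) ^ 2) ∧
      r = ((2 : ℝ) ^ (j + n * (i + 2) ^ 2))⁻¹} := by
    exact ⟨i, j, hji, by rw [← hk]; exact hl, by rw [hk]⟩
  exact le_antisymm (csSup_le ⟨_, hmem⟩ hub) (le_csSup ⟨_, hub⟩ hmem)

lemma part_i (n m : ℕ) : (m : ℝ) * aSeq n m ≤ 1 := by
  rw [aSeq_eq]
  have hl : m < 2 ^ Kf n m := (Kf_spec n m).2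
  have h1 : (m : ℝ) ≤ 2 ^ Kf n m := by exact_mod_cast hl.le
  have h2 : (0:ℝ) < 2 ^ Kf n m := by positivity
  calc (m : ℝ) * ((2:ℝ) ^ Kf n m)⁻¹ ≤ (2:ℝ) ^ Kf n m * ((2:ℝ) ^ Kf n m)⁻¹ :=
        mul_le_mul_of_nonneg_right h1 (by positivity)
    _ = 1 := mul_inv_cancel₀ (ne_of_gt h2)

open Classical in
noncomputable def Dset (n m : ℕ) : Finset ℕ :=
  Finset.filter (fun k => Expo n k ∧ 2 ^ k ≤ m) (Finset.range (m + 1))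

lemma Dset_mono (n m : ℕ) : Dset n m ⊆ Dset n (m + 1) := by
  classical
  intro k hk
  simp only [Dset, Finset.mem_filter, Finset.mem_range] at hk ⊢
  exact ⟨by omega, hk.2.1, by omega⟩

lemma sum_le (n m : ℕ) : ∑ l ∈ Finset.range (m + 1), aSeq n l ≤
    ((Dset n m).card : ℝ) + (m + 1) * ((2 : ℝ) ^ Kf n m)⁻¹ := by
  induction m with
  | zero =>
      rw [Finset.sum_range_one, aSeq_eq]
      have h1 : (0:ℝ) ≤ ((Dset n 0).card : ℝ) := by positivity
      have h2 : (0:ℝ) ≤ ((2 : ℝ) ^ Kf n 0)⁻¹ := by positivity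
      push_cast
      linarith
  | succ m ih =>
      rw [Finset.sum_range_succ]
      have hc : ((Dset n m).card : ℝ) ≤ ((Dset n (m+1)).card : ℝ) := by
        exact_mod_cast Finset.card_le_card (Dset_mono n m)
      have hy : (0:ℝ) ≤ ((2 : ℝ) ^ Kf n (m+1))⁻¹ := by positivity
      have hmy : (0:ℝ) ≤ ((m:ℝ)+1) * ((2 : ℝ) ^ Kf n (m+1))⁻¹ := by positivity
      rw [aSeq_eq]
      by_cases h : Kf n (m+1) = Kf n m
      · rw [← h] at ih
        push_cast
        linarith
      · -- Kf n m < Kf n (m+1); in fact Kf n m ≤ Kf n (m+1) always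
        have hmono : Kf n m ≤ Kf n (m+1) := by
          obtain ⟨he, hl⟩ := Kf_spec n (m+1)
          exact Kf_min n m _ he (by omega)
        have h2m : 2 ^ Kf n m ≤ m + 1 := by
          by_contra hcon
          exact h (le_antisymm (Kf_min n (m+1) _ (Kf_spec n m).1 (by omega)) hmono)
        have hcard : ((Dset n m).card : ℝ) + 1 ≤ ((Dset n (m+1)).card : ℝ) := by
          have hss : Dset n m ⊂ Dset n (m+1) := by
            classical
            refine ⟨Dset_mono n m, fun hsub => ?_⟩
            have hmem : Kf n m ∈ Dset n (m+1) := by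
              simp only [Dset, Finset.mem_filter, Finset.mem_range]
              have : Kf n m < 2 ^ Kf n m := Nat.lt_two_pow_self
              exact ⟨by omega, (Kf_spec n m).1, h2m⟩
            have := hsub hmem
            simp only [Dset, Finset.mem_filter, Finset.mem_range] at this
            have := (Kf_spec n m).2
            omega
          have := Finset.card_lt_card hss
          exact_mod_cast this
        have hx1 : ((m:ℝ)+1) * ((2 : ℝ) ^ Kf n m)⁻¹ ≤ 1 := by
          have hn1 : m + 1 ≤ 2 ^ Kf n m := (Kf_spec n m).2
          have h1 : ((m:ℝ)+1) ≤ 2 ^ Kf n m := by exact_mod_cast hn1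
          have h2 : (0:ℝ) < 2 ^ Kf n m := by positivity
          calc ((m:ℝ)+1) * ((2:ℝ) ^ Kf n m)⁻¹ ≤ (2:ℝ) ^ Kf n m * ((2:ℝ) ^ Kf n m)⁻¹ :=
                mul_le_mul_of_nonneg_right h1 (by positivity)
            _ = 1 := mul_inv_cancel₀ (ne_of_gt h2)
        push_cast
        push_cast at ih
        nlinarith

lemma log_half : (1/2 : ℝ) ≤ Real.log 2 := by
  have := Real.log_two_gt_d9
  linarith


/-- For the sequence `a = aSeq n` (with `n ≥ 1`):
(i) `m · a_m ≤ 1` for every `m` (so `a` lies in the unit ball of the weak-`l₁`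
quasi-norm);
(ii) `Σ_{l=0}^m a_l ≤ (2/n) log(2+m)` for every `m` (so the `M_{1,∞}`-norm of `a`
is at most `2/n`). -/
theorem stmt_13 (n : ℕ) (hn : 1 ≤ n) :
    (∀ m : ℕ, (m : ℝ) * aSeq n m ≤ 1) ∧
    (∀ m : ℕ, ∑ l ∈ Finset.range (m + 1), aSeq n l ≤
      (2 / (n : ℝ)) * Real.log (2 + (m : ℝ))) := by
  classical
  have hn0 : (0:ℝ) < n := by exact_mod_cast hn
  refine ⟨part_i n, fun m => ?_⟩
  have hsum := sum_le n m
  have hK4 : 4 * n ≤ Kf n m := Expo_ge n _ (Kf_spec n m).1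
  have hlog2 : Real.log 2 ≤ Real.log (2 + (m:ℝ)) := by
    apply Real.log_le_log (by norm_num)
    have : (0:ℝ) ≤ m := Nat.cast_nonneg m
    linarith
  by_cases hm : m + 1 ≤ 2 ^ (2 * n)
  · -- small case : Dset empty
    have hD : Dset n m = ∅ := by
      rw [Finset.eq_empty_iff_forall_notMem]
      intro k hk
      simp only [Dset, Finset.mem_filter, Finset.mem_range] at hk
      have h4 : 4 * n ≤ k := Expo_ge n k hk.2.1
      have : 2 ^ (2*n) ≤ 2 ^ k := Nat.pow_le_pow_right (by norm_num) (by omega)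
      omega
    rw [hD] at hsum
    simp only [Finset.card_empty, Nat.cast_zero, zero_add] at hsum
    have hx : ((m:ℝ) + 1) * ((2 : ℝ) ^ Kf n m)⁻¹ ≤ ((2:ℝ) ^ (2*n))⁻¹ := by
      have h1 : ((m:ℝ) + 1) ≤ (2:ℝ) ^ (2*n) := by exact_mod_cast hm
      have h2 : ((2:ℝ) ^ Kf n m)⁻¹ ≤ ((2:ℝ) ^ (4*n))⁻¹ :=
        inv_anti₀ (by positivity) (pow_le_pow_right₀ one_le_two hK4)
      calc ((m:ℝ) + 1) * ((2 : ℝ) ^ Kf n m)⁻¹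
          ≤ (2:ℝ) ^ (2*n) * ((2:ℝ) ^ (4*n))⁻¹ := by
            apply mul_le_mul h1 h2 (by positivity) (by positivity)
        _ = ((2:ℝ) ^ (2*n))⁻¹ := by
            rw [show 4*n = 2*n + 2*n by ring, pow_add]
            field_simp
    have hninv : ((2:ℝ) ^ (2*n))⁻¹ ≤ (n:ℝ)⁻¹ := by
      apply inv_anti₀ hn0
      have : n < 2 ^ n := (Nat.lt_two_pow_self (n := n))
      have h2 : (2:ℕ) ^ n ≤ 2 ^ (2*n) := Nat.pow_le_pow_right (by norm_num) (by omega)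
      exact_mod_cast (by omega : n ≤ 2 ^ (2*n))
    have hrhs : (n:ℝ)⁻¹ ≤ (2 / (n : ℝ)) * Real.log (2 + (m : ℝ)) := by
      have hl : (1/2 : ℝ) ≤ Real.log (2 + (m:ℝ)) := le_trans log_half hlog2
      rw [div_mul_eq_mul_div, inv_eq_one_div, div_le_div_iff₀ hn0 hn0]
      nlinarith
    linarith
  · -- large case : m ≥ 2^(2n)
    push_neg at hm
    have hmn : 2 ^ (2*n) ≤ m := by omega
    have hlogm : (n : ℝ) ≤ Real.log (2 + (m:ℝ)) := by
      have h1 : ((2:ℝ) ^ (2*n)) ≤ 2 + (m:ℝ) := by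
        have : ((2:ℕ) ^ (2*n) : ℝ) ≤ (m:ℝ) := by exact_mod_cast hmn
        push_cast at this
        linarith
      have h2 : Real.log ((2:ℝ) ^ (2*n)) ≤ Real.log (2 + (m:ℝ)) :=
        Real.log_le_log (by positivity) h1
      rw [Real.log_pow] at h2
      have := log_half
      push_cast at h2
      nlinarith
    have hx1 : ((m:ℝ) + 1) * ((2 : ℝ) ^ Kf n m)⁻¹ ≤ 1 := by
      have hn1 : m + 1 ≤ 2 ^ Kf n m := (Kf_spec n m).2
      have h1 : ((m:ℝ)+1) ≤ 2 ^ Kf n m := by exact_mod_cast hn1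
      have h2 : (0:ℝ) < 2 ^ Kf n m := by positivity
      calc ((m:ℝ)+1) * ((2:ℝ) ^ Kf n m)⁻¹ ≤ (2:ℝ) ^ Kf n m * ((2:ℝ) ^ Kf n m)⁻¹ :=
            mul_le_mul_of_nonneg_right h1 (by positivity)
        _ = 1 := mul_inv_cancel₀ (ne_of_gt h2)
    set Q : Finset (ℕ × ℕ) := Finset.filter
        (fun p : ℕ × ℕ => p.2 ≤ p.1 ∧ 2 ^ (n * (p.1 + 2) ^ 2) ≤ m)
        (Finset.range (m + 1) ×ˢ Finset.range (m + 1)) with hQdef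
    have hDQ : Dset n m ⊆ Finset.image (fun p : ℕ × ℕ => p.2 + n * (p.1 + 2) ^ 2) Q := by
      intro k hk
      simp only [Dset, Finset.mem_filter, Finset.mem_range] at hk
      obtain ⟨hkr, ⟨i, j, hji, hke⟩, h2k⟩ := hk
      have hik : n * (i + 2) ^ 2 ≤ k := by omega
      have h2i : 2 ^ (n * (i + 2) ^ 2) ≤ m :=
        le_trans (Nat.pow_le_pow_right (by norm_num) hik) h2k
      have hkm : k ≤ m := by
        have : k < 2 ^ k := (Nat.lt_two_pow_self (n := k))
        omega
      have him : i ≤ m := by nlinarith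
      rw [Finset.mem_image]
      refine ⟨(i, j), ?_, by dsimp only; omega⟩
      simp only [hQdef, Finset.mem_filter, Finset.mem_product, Finset.mem_range]
      exact ⟨⟨by omega, by omega⟩, hji, h2i⟩
    have hcardQ : (Dset n m).card ≤ Q.card :=
      le_trans (Finset.card_le_card hDQ) Finset.card_image_le
    by_cases hQe : Q = ∅
    · have hc0 : (Dset n m).card = 0 := by
        rw [hQe] at hcardQ; simpa using hcardQ
      rw [hc0] at hsum
      have h2le : (2:ℝ) ≤ (2 / (n : ℝ)) * Real.log (2 + (m : ℝ)) := by
        rw [div_mul_eq_mul_div, le_div_iff₀ hn0]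
        nlinarith
      simp only [Nat.cast_zero, zero_add] at hsum
      linarith
    · obtain ⟨p0, hp0Q, hp0max⟩ := Finset.exists_max_image Q (fun p => p.1)
        (Finset.nonempty_iff_ne_empty.mpr hQe)
      have hp0 : 2 ^ (n * (p0.1 + 2) ^ 2) ≤ m := by
        simp only [hQdef, Finset.mem_filter] at hp0Q
        exact hp0Q.2.2
      have hQsub : Q ⊆ Finset.range (p0.1 + 1) ×ˢ Finset.range (p0.1 + 1) := by
        intro p hp
        have h1 := hp0max p hp
        simp only [hQdef, Finset.mem_filter] at hp
        simp only [Finset.mem_product, Finset.mem_range]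
        have := hp.2.1
        omega
      have hQcard : Q.card ≤ (p0.1 + 1) ^ 2 := by
        have := Finset.card_le_card hQsub
        rwa [Finset.card_product, Finset.card_range, ← pow_two] at this
      have hcT : (Dset n m).card + 1 ≤ (p0.1 + 2) ^ 2 := by
        have hsq : (p0.1 + 2) ^ 2 = (p0.1 + 1) ^ 2 + (2 * p0.1 + 3) := by ring
        linarith [hcardQ, hQcard]
      -- (p0.1+2)^2 ≤ (2/n) log (2+m)
      have hlogT : ((n:ℝ) * ((p0.1:ℝ) + 2) ^ 2) * (1/2) ≤ Real.log (2 + (m:ℝ)) := by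
        have h1 : ((2:ℝ) ^ (n * (p0.1 + 2) ^ 2)) ≤ 2 + (m:ℝ) := by
          have : ((2:ℕ) ^ (n * (p0.1 + 2) ^ 2) : ℝ) ≤ (m:ℝ) := by exact_mod_cast hp0
          push_cast at this
          linarith
        have h2 : Real.log ((2:ℝ) ^ (n * (p0.1 + 2) ^ 2)) ≤ Real.log (2 + (m:ℝ)) :=
          Real.log_le_log (by positivity) h1
        rw [Real.log_pow] at h2
        push_cast at h2
        have := log_half
        nlinarith [mul_nonneg (le_of_lt hn0) (sq_nonneg ((p0.1:ℝ) + 2))]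
      have hfin : (((p0.1:ℝ)) + 2) ^ 2 ≤ (2 / (n : ℝ)) * Real.log (2 + (m:ℝ)) := by
        rw [div_mul_eq_mul_div, le_div_iff₀ hn0]
        nlinarith
      have hcast : ((Dset n m).card : ℝ) + 1 ≤ ((p0.1:ℝ) + 2) ^ 2 := by exact_mod_cast hcT
      linarith
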